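/- Let C > 0, K₀ > 0 and T < 1/(2C²K₀). Suppose a sequence of nonnegative continuous functions Γⁿ on [0,T] satisfies Γⁿ(t) ≤ C K₀ / (1 − 2C² K₀ t) for all t ∈ [0,T]. Then the quantity C e^{C Uⁿ(t)} (K₀ + ∫_0^t e^{−C Uⁿ(τ)} (Γⁿ(τ))² dτ), where Uⁿ(t) = ∫_0^t Γⁿ(τ) dτ, is bounded by C K₀ / (1 − 2C² K₀ t), using the bound e^{C(Uⁿ(t)−Uⁿ(τ))} ≤ √((1 − 2C²K₀τ)/(1 − 2C²K₀t)). -/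

import Mathlib

open MeasureTheory intervalIntegral

theorem inductive_uniform_bound (C K₀ T : ℝ) (Γ : ℝ → ℝ)
    (hC : 0 < C) (hK : 0 < K₀) (hT0 : 0 ≤ T) (hT : T < 1 / (2 * C ^ 2 * K₀))
    (hΓ_cont : ContinuousOn Γ (Set.Icc 0 T))
    (hΓ_nonneg : ∀ t ∈ Set.Icc 0 T, 0 ≤ Γ t)
    (hΓ : ∀ t ∈ Set.Icc 0 T, Γ t ≤ C * K₀ / (1 - 2 * C ^ 2 * K₀ * t)) :
    ∀ t ∈ Set.Icc 0 T,
      C * Real.exp (C * ∫ τ in (0:ℝ)..t, Γ τ) *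
          (K₀ + ∫ τ in (0:ℝ)..t, Real.exp (-C * ∫ s in (0:ℝ)..τ, Γ s) * (Γ τ) ^ 2)
        ≤ C * K₀ / (1 - 2 * C ^ 2 * K₀ * t) := by
  intro t ht
  obtain ⟨ht0, htT⟩ := ht
  set a : ℝ := 2 * C ^ 2 * K₀ with ha_def
  have ha : 0 < a := by positivity
  have haT : a * T < 1 := by
    rw [lt_div_iff₀ ha] at hT
    nlinarith
  have hr : ∀ s, 0 ≤ s → s ≤ T → 0 < 1 - a * s := by
    intro s hs0 hsT
    nlinarith
  have hrt : 0 < 1 - a * t := hr t ht0 htT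
  -- integrability of Γ on subintervals of [0,T]
  have hΓi : ∀ p q, p ∈ Set.Icc (0:ℝ) T → q ∈ Set.Icc (0:ℝ) T →
      IntervalIntegrable Γ volume p q := by
    intro p q hp hq
    exact (hΓ_cont.mono (Set.uIcc_subset_Icc hp hq)).intervalIntegrable
  -- key exponential bound
  have hexp : ∀ τ, 0 ≤ τ → τ ≤ t →
      Real.exp (C * ∫ s in τ..t, Γ s) ≤ ((1 - a * τ) / (1 - a * t)) ^ ((1:ℝ)/2) := by
    intro τ hτ0 hτt
    have hτT : τ ≤ T := hτt.trans htT
    have hrτ : 0 < 1 - a * τ := hr τ hτ0 hτT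
    have hsub : Set.uIcc τ t ⊆ Set.Icc 0 T :=
      Set.uIcc_subset_Icc ⟨hτ0, hτT⟩ ⟨ht0, htT⟩
    have hint2 : IntervalIntegrable (fun s => C ^ 2 * K₀ / (1 - a * s)) volume τ t := by
      apply ContinuousOn.intervalIntegrable
      apply ContinuousOn.div continuousOn_const (by fun_prop)
      intro s hs
      exact (hr s (hsub hs).1 (hsub hs).2).ne'
    have hint1 : IntervalIntegrable (fun s => C * Γ s) volume τ t :=
      (hΓi τ t ⟨hτ0, hτT⟩ ⟨ht0, htT⟩).const_mul C
    have step1 : (∫ s in τ..t, C * Γ s) ≤ ∫ s in τ..t, C ^ 2 * K₀ / (1 - a * s) := by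
      apply intervalIntegral.integral_mono_on hτt hint1 hint2
      intro s hs
      have hsI : s ∈ Set.Icc (0:ℝ) T := ⟨hτ0.trans hs.1, hs.2.trans htT⟩
      have h1 := hΓ s hsI
      calc C * Γ s ≤ C * (C * K₀ / (1 - a * s)) :=
            mul_le_mul_of_nonneg_left h1 hC.le
        _ = C ^ 2 * K₀ / (1 - a * s) := by ring
    have step2 : (∫ s in τ..t, C ^ 2 * K₀ / (1 - a * s))
        = (-(1/2) * Real.log (1 - a * t)) - (-(1/2) * Real.log (1 - a * τ)) := by
      apply intervalIntegral.integral_eq_sub_of_hasDerivAt _ hint2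
      intro s hs
      have hrs : 0 < 1 - a * s := hr s (hsub hs).1 (hsub hs).2
      have h1 : HasDerivAt (fun x : ℝ => 1 - a * x) (-a) s := by
        simpa using ((hasDerivAt_id s).const_mul a).const_sub 1
      have h2 := (h1.log hrs.ne').const_mul (-(1/2 : ℝ))
      refine h2.congr_deriv ?_
      rw [ha_def]
      field_simp
    have h3 : C * (∫ s in τ..t, Γ s)
        ≤ (1/2) * (Real.log (1 - a * τ) - Real.log (1 - a * t)) := by
      rw [← intervalIntegral.integral_const_mul]
      calc (∫ s in τ..t, C * Γ s) ≤ _ := step1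
        _ = (1/2) * (Real.log (1 - a * τ) - Real.log (1 - a * t)) := by
          rw [step2]; ring
    have h4 : ((1 - a * τ) / (1 - a * t)) ^ ((1:ℝ)/2)
        = Real.exp ((1/2) * (Real.log (1 - a * τ) - Real.log (1 - a * t))) := by
      rw [Real.rpow_def_of_pos (div_pos hrτ hrt), Real.log_div hrτ.ne' hrt.ne']
      ring_nf
    rw [h4]
    exact Real.exp_le_exp.mpr h3
  -- splitting of the primitive
  have hu : ∀ τ, 0 ≤ τ → τ ≤ t →
      (∫ s in (0:ℝ)..t, Γ s) - (∫ s in (0:ℝ)..τ, Γ s) = ∫ s in τ..t, Γ s := by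
    intro τ hτ0 hτt
    have h := intervalIntegral.integral_add_adjacent_intervals
      (hΓi 0 τ ⟨le_refl 0, hT0⟩ ⟨hτ0, hτt.trans htT⟩)
      (hΓi τ t ⟨hτ0, hτt.trans htT⟩ ⟨ht0, htT⟩)
    linarith
  -- continuity of the primitive
  have hu_cont : ContinuousOn (fun x => ∫ s in (0:ℝ)..x, Γ s) (Set.Icc 0 t) := by
    have h := intervalIntegral.continuousOn_primitive_interval'
      (hΓi 0 t ⟨le_refl 0, hT0⟩ ⟨ht0, htT⟩) Set.left_mem_uIcc
    rwa [Set.uIcc_of_le ht0] at h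
  -- continuity of the transformed integrand
  have hlhs_cont : ContinuousOn
      (fun τ => Real.exp (C * ∫ s in τ..t, Γ s) * Γ τ ^ 2) (Set.Icc 0 t) := by
    have hIcc : Set.Icc (0:ℝ) t ⊆ Set.Icc 0 T := Set.Icc_subset_Icc le_rfl htT
    have h1 : ContinuousOn
        (fun τ => Real.exp (C * ((∫ s in (0:ℝ)..t, Γ s) - ∫ s in (0:ℝ)..τ, Γ s)) * Γ τ ^ 2)
        (Set.Icc 0 t) := by
      apply ContinuousOn.mul
      · exact (Real.continuous_exp.comp_continuousOn
          (continuousOn_const.mul (continuousOn_const.sub hu_cont)))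
      · exact ((hΓ_cont.mono hIcc).pow 2)
    apply h1.congr
    intro τ hτ
    simp only [hu τ hτ.1 hτ.2]
  have hint_lhs : IntervalIntegrable
      (fun τ => Real.exp (C * ∫ s in τ..t, Γ s) * Γ τ ^ 2) volume 0 t := by
    apply ContinuousOn.intervalIntegrable
    rwa [Set.uIcc_of_le ht0]
  have hint_rhs : IntervalIntegrable
      (fun τ => C ^ 2 * K₀ ^ 2 * (1 - a * t) ^ (-(1/2) : ℝ) * (1 - a * τ) ^ (-(3/2) : ℝ))
      volume 0 t := by
    apply ContinuousOn.intervalIntegrable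
    apply ContinuousOn.mul continuousOn_const
    apply ContinuousOn.rpow_const (by fun_prop)
    intro x hx
    rw [Set.uIcc_of_le ht0] at hx
    exact Or.inl (hr x hx.1 (hx.2.trans htT)).ne'
  -- rewrite product of exponentials into one integral
  have hprod : Real.exp (C * ∫ s in (0:ℝ)..t, Γ s) *
      (∫ τ in (0:ℝ)..t, Real.exp (-C * ∫ s in (0:ℝ)..τ, Γ s) * Γ τ ^ 2)
      = ∫ τ in (0:ℝ)..t, Real.exp (C * ∫ s in τ..t, Γ s) * Γ τ ^ 2 := by
    rw [← intervalIntegral.integral_const_mul]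
    apply intervalIntegral.integral_congr
    intro τ hτ
    rw [Set.uIcc_of_le ht0] at hτ
    have h := hu τ hτ.1 hτ.2
    show Real.exp _ * (Real.exp _ * _) = _
    rw [← mul_assoc, ← Real.exp_add]
    congr 2
    rw [← h]; ring
  -- pointwise bound on the integrand
  have hbound : (∫ τ in (0:ℝ)..t, Real.exp (C * ∫ s in τ..t, Γ s) * Γ τ ^ 2)
      ≤ ∫ τ in (0:ℝ)..t,
          C ^ 2 * K₀ ^ 2 * (1 - a * t) ^ (-(1/2) : ℝ) * (1 - a * τ) ^ (-(3/2) : ℝ) := by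
    apply intervalIntegral.integral_mono_on ht0 hint_lhs hint_rhs
    intro τ hτ
    have hτT : τ ≤ T := hτ.2.trans htT
    have h1 := hexp τ hτ.1 hτ.2
    have hΓτ := hΓ τ ⟨hτ.1, hτT⟩
    have hΓτ0 := hΓ_nonneg τ ⟨hτ.1, hτT⟩
    have hrτ : 0 < 1 - a * τ := hr τ hτ.1 hτT
    have h2 : Γ τ ^ 2 ≤ (C * K₀ / (1 - a * τ)) ^ 2 := by
      apply pow_le_pow_left₀ hΓτ0 hΓτ
    have e1 : (1 - a * τ) ^ ((1:ℝ)/2) * (1 - a * τ) ^ ((3:ℝ)/2) = (1 - a * τ) ^ 2 := by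
      rw [← Real.rpow_natCast (1 - a * τ) 2, ← Real.rpow_add hrτ]
      norm_num
    calc Real.exp (C * ∫ s in τ..t, Γ s) * Γ τ ^ 2
        ≤ ((1 - a * τ) / (1 - a * t)) ^ ((1:ℝ)/2) * (C * K₀ / (1 - a * τ)) ^ 2 :=
          mul_le_mul h1 h2 (sq_nonneg _) (by positivity)
      _ = C ^ 2 * K₀ ^ 2 * (1 - a * t) ^ (-(1/2) : ℝ) * (1 - a * τ) ^ (-(3/2) : ℝ) := by
          rw [Real.div_rpow hrτ.le hrt.le, div_pow, mul_pow]
          rw [show (-(1/2) : ℝ) = -((1:ℝ)/2) by norm_num,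
            show (-(3/2) : ℝ) = -((3:ℝ)/2) by norm_num,
            Real.rpow_neg hrt.le, Real.rpow_neg hrτ.le]
          have hp1 : (0:ℝ) < (1 - a * τ) ^ ((1:ℝ)/2) := Real.rpow_pos_of_pos hrτ _
          have hp2 : (0:ℝ) < (1 - a * t) ^ ((1:ℝ)/2) := Real.rpow_pos_of_pos hrt _
          have hp3 : (0:ℝ) < (1 - a * τ) ^ ((3:ℝ)/2) := Real.rpow_pos_of_pos hrτ _
          field_simp
          linear_combination e1
  -- compute the right-hand integral by FTC
  have hFTC : (∫ τ in (0:ℝ)..t,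
        C ^ 2 * K₀ ^ 2 * (1 - a * t) ^ (-(1/2) : ℝ) * (1 - a * τ) ^ (-(3/2) : ℝ))
      = K₀ * (1 - a * t) ^ (-(1/2) : ℝ) * ((1 - a * t) ^ (-(1/2) : ℝ) - 1) := by
    have hderiv : ∀ τ ∈ Set.uIcc (0:ℝ) t,
        HasDerivAt (fun x => K₀ * (1 - a * t) ^ (-(1/2) : ℝ) * (1 - a * x) ^ (-(1/2) : ℝ))
          (C ^ 2 * K₀ ^ 2 * (1 - a * t) ^ (-(1/2) : ℝ) * (1 - a * τ) ^ (-(3/2) : ℝ)) τ := by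
      intro τ hτ
      rw [Set.uIcc_of_le ht0] at hτ
      have hrτ : 0 < 1 - a * τ := hr τ hτ.1 (hτ.2.trans htT)
      have h1 : HasDerivAt (fun x : ℝ => 1 - a * x) (-a) τ := by
        simpa using ((hasDerivAt_id τ).const_mul a).const_sub 1
      have h2 := (h1.rpow_const (p := (-(1/2) : ℝ)) (Or.inl hrτ.ne')).const_mul (K₀ * (1 - a * t) ^ (-(1/2) : ℝ))
      refine h2.congr_deriv ?_
      rw [show (-(1/2) - 1 : ℝ) = -(3/2) by norm_num]
      rw [ha_def]
      ring
    rw [intervalIntegral.integral_eq_sub_of_hasDerivAt hderiv hint_rhs]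
    have : (1 - a * 0 : ℝ) = 1 := by ring
    rw [this, Real.one_rpow]
    ring
  -- assemble everything
  have hb2 : (1 - a * t) ^ (-(1/2) : ℝ) * (1 - a * t) ^ (-(1/2) : ℝ) = 1 / (1 - a * t) := by
    rw [← Real.rpow_add hrt]
    norm_num [Real.rpow_neg_one]
  have hE : Real.exp (C * ∫ s in (0:ℝ)..t, Γ s) ≤ (1 - a * t) ^ (-(1/2) : ℝ) := by
    have h := hexp 0 le_rfl ht0
    have h0 : (1 - a * 0 : ℝ) = 1 := by ring
    rw [h0] at h
    calc Real.exp (C * ∫ s in (0:ℝ)..t, Γ s) ≤ (1 / (1 - a * t)) ^ ((1:ℝ)/2) := h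
      _ = (1 - a * t) ^ (-(1/2) : ℝ) := by
        rw [show (-(1/2) : ℝ) = -((1:ℝ)/2) by norm_num, Real.rpow_neg hrt.le,
          one_div, Real.inv_rpow hrt.le]
  set E := Real.exp (C * ∫ s in (0:ℝ)..t, Γ s) with hE_def
  set I := ∫ τ in (0:ℝ)..t, Real.exp (-C * ∫ s in (0:ℝ)..τ, Γ s) * Γ τ ^ 2 with hI_def
  set b := (1 - a * t) ^ (-(1/2) : ℝ) with hb_def
  have hEI : E * I ≤ K₀ * b * (b - 1) := by
    calc E * I = _ := hprod
      _ ≤ _ := hbound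
      _ = K₀ * b * (b - 1) := hFTC
  have hEK : E * K₀ ≤ b * K₀ := mul_le_mul_of_nonneg_right hE hK.le
  have hS : E * K₀ + E * I ≤ K₀ / (1 - a * t) := by
    calc E * K₀ + E * I ≤ b * K₀ + K₀ * b * (b - 1) := add_le_add hEK hEI
      _ = K₀ * (b * b) := by ring
      _ = K₀ / (1 - a * t) := by rw [hb2]; ring
  calc C * E * (K₀ + I) = C * (E * K₀ + E * I) := by ring
    _ ≤ C * (K₀ / (1 - a * t)) := mul_le_mul_of_nonneg_left hS hC.le
    _ = C * K₀ / (1 - a * t) := by ring
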